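/- arXiv:2203.11003 — 8 statements merged into one kernel-verified Lean document; each statement's English description precedes it below -/
import Mathlib

section
/- Let X be a W-space, C ⊆ X convex, T : C → C, u ∈ C, and (βₙ), (λₙ) sequences in [0,1]. Define the Tikhonov-Mann iteration x₀ ∈ C, uₙ = (1−βₙ)u + βₙxₙ, x_{n+1} = (1−λₙ)uₙ + λₙT(uₙ), and the modified Halpern iteration y₀ ∈ C, vₙ = (1−λₙ)yₙ + λₙT(yₙ), y_{n+1} = (1−β_{n+1})u + β_{n+1}vₙ. If y₀ = (1−β₀)u + β₀x₀, then for all n ∈ ℕ, uₙ = yₙ and x_{n+1} = vₙ. -/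
/-- Linking proposition: if y₀ = (1−β₀)u + β₀x₀, then uₙ = yₙ and x_{n+1} = vₙ
for all n, where (xₙ) is the Tikhonov-Mann and (yₙ) the modified Halpern iteration. -/
theorem tikhonovMann_eq_modifiedHalpern {X : Type*} [MetricSpace X]
    (W : X → X → ℝ → X) (C : Set X)
    (hC : ∀ x ∈ C, ∀ y ∈ C, ∀ l ∈ Set.Icc (0:ℝ) 1, W x y l ∈ C)
    (T : X → X) (hT : ∀ x ∈ C, T x ∈ C)
    (u : X) (hu : u ∈ C)
    (β lam : ℕ → ℝ) (hβ : ∀ n, β n ∈ Set.Icc (0:ℝ) 1)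
    (hlam : ∀ n, lam n ∈ Set.Icc (0:ℝ) 1)
    (x y uu v : ℕ → X) (hx0 : x 0 ∈ C)
    (huu : ∀ n, uu n = W u (x n) (β n))
    (hxrec : ∀ n, x (n + 1) = W (uu n) (T (uu n)) (lam n))
    (hv : ∀ n, v n = W (y n) (T (y n)) (lam n))
    (hyrec : ∀ n, y (n + 1) = W u (v n) (β (n + 1)))
    (hy0 : y 0 = W u (x 0) (β 0)) :
    ∀ n : ℕ, uu n = y n ∧ x (n + 1) = v n := by
  intro n
  induction n with
  | zero =>
    have h1 : uu 0 = y 0 := by rw [huu, hy0]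
    exact ⟨h1, by rw [hxrec, hv, h1]⟩
  | succ n ih =>
    have h1 : uu (n + 1) = y (n + 1) := by rw [huu, hyrec, ih.2]
    exact ⟨h1, by rw [hxrec, hv, h1]⟩
end

section
/- Let (aₙ)_{n≥1} be a sequence of non-negative reals with a₁ ≤ L for some L > 0, and set bₙ = min{2/n, 1}. Suppose for all n ≥ 1, a_{n+1} ≤ (1 − b_{n+1})aₙ + (bₙ − b_{n+1})cₙ, where (cₙ) is a sequence of reals with cₙ ≤ L for all n ≥ 1. Then aₙ ≤ 2L/n for all n ≥ 1. -/
/-- Sabach–Shtern Lemma 3: if a₁ ≤ L, bₙ = min{2/n, 1}, cₙ ≤ L, and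
a_{n+1} ≤ (1−b_{n+1})aₙ + (bₙ−b_{n+1})cₙ for all n ≥ 1, then aₙ ≤ 2L/n. -/
theorem sabach_shtern_lemma (L : ℝ) (hL : 0 < L) (a c : ℕ → ℝ)
    (ha_nonneg : ∀ n, 1 ≤ n → 0 ≤ a n) (ha1 : a 1 ≤ L)
    (hc : ∀ n, 1 ≤ n → c n ≤ L)
    (hrec : ∀ n, 1 ≤ n →
      a (n + 1) ≤ (1 - min (2 / (n + 1 : ℝ)) 1) * a n +
        (min (2 / (n : ℝ)) 1 - min (2 / (n + 1 : ℝ)) 1) * c n) :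
    ∀ n, 1 ≤ n → a n ≤ 2 * L / n := by
  have key : ∀ n, 1 ≤ n → a n ≤ min (2 / (n : ℝ)) 1 * L := by
    intro n hn
    induction n, hn using Nat.le_induction with
    | base => simpa using ha1
    | succ n hn ih =>
      have hnp : (0 : ℝ) < (n : ℝ) := by exact_mod_cast hn
      set b1 := min (2 / ((n : ℝ) + 1)) 1 with hb1def
      set b0 := min (2 / (n : ℝ)) 1 with hb0def
      have hb1le : b1 ≤ 1 := min_le_right _ _
      have hb1nn : 0 ≤ b1 := le_min (by positivity) one_pos.le
      have hb0nn : 0 ≤ b0 := le_min (by positivity) one_pos.le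
      have hmono : b1 ≤ b0 := by
        apply min_le_min _ le_rfl
        apply div_le_div_of_nonneg_left (by norm_num) hnp (by linarith)
      have h := hrec n hn
      push_cast at h
      have step : a (n + 1) ≤ (1 - b1) * (b0 * L) + (b0 - b1) * L := by
        calc a (n + 1) ≤ (1 - b1) * a n + (b0 - b1) * c n := h
          _ ≤ (1 - b1) * (b0 * L) + (b0 - b1) * L :=
              add_le_add (mul_le_mul_of_nonneg_left ih (by linarith))
                (mul_le_mul_of_nonneg_left (hc n hn) (by linarith))
      have arith : (1 - b1) * (b0 * L) + (b0 - b1) * L ≤ b1 * L := by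
        have key2 : 2 * b0 ≤ b1 * (2 + b0) := by
          rcases eq_or_lt_of_le hn with h1 | h2
          · have : n = 1 := h1.symm
            subst this
            simp only [hb0def, hb1def]
            norm_num
          · have hn2 : (2 : ℝ) ≤ (n : ℝ) := by exact_mod_cast h2
            have e0 : b0 = 2 / (n : ℝ) := min_eq_left (by
              rw [div_le_one hnp]; linarith)
            have e1 : b1 = 2 / ((n : ℝ) + 1) := min_eq_left (by
              rw [div_le_one (by linarith)]; linarith)
            rw [e0, e1]
            have h4 : (2:ℝ)/((n:ℝ)+1)*(2+2/(n:ℝ)) = 2*(2/(n:ℝ)) := by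
              field_simp
            rw [h4]
        nlinarith [hL.le]
      push_cast
      linarith
  intro n hn
  have hnp : (0 : ℝ) < (n : ℝ) := by exact_mod_cast hn
  have := key n hn
  have : a n ≤ 2 / (n : ℝ) * L := this.trans (by gcongr; exact min_le_left _ _)
  rw [div_mul_eq_mul_div] at this
  linarith [this]
end

section
/- Let X be a W-hyperbolic space, C ⊆ X convex, T : C → C nonexpansive with a fixed point p, u, y₀ ∈ C, λ ∈ (0,1], β₁ = 0 and βₙ = 1 − 2/n for n ≥ 2. Define the modified Halpern iteration y_{n+1} = (1−β_{n+1})u + β_{n+1}((1−λ)yₙ + λT(yₙ)). If M ∈ ℕ, M ≥ 1, and M ≥ 4·max{d(u,p), d(y₀,p)}, then for all n ≥ 0: d(y_{n+1}, yₙ) ≤ 2M/(n+1) and d(yₙ, T yₙ) ≤ 4M/(λ(n+1)). -/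
set_option maxHeartbeats 1000000


/-- Linear rates of asymptotic regularity for the modified Halpern iteration with
λₙ = λ, β₁ = 0, βₙ = 1 − 2/n (n ≥ 2), in W-hyperbolic spaces. -/
theorem modifiedHalpern_linear_rate {X : Type*} [MetricSpace X] (W : X → X → ℝ → X)
    (W1 : ∀ x y z : X, ∀ l ∈ Set.Icc (0:ℝ) 1,
      dist z (W x y l) ≤ (1 - l) * dist z x + l * dist z y)
    (W2 : ∀ x y : X, ∀ l ∈ Set.Icc (0:ℝ) 1, ∀ m ∈ Set.Icc (0:ℝ) 1,
      dist (W x y l) (W x y m) = |l - m| * dist x y)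
    (W3 : ∀ x y : X, ∀ l ∈ Set.Icc (0:ℝ) 1, W x y l = W y x (1 - l))
    (W4 : ∀ x y z w : X, ∀ l ∈ Set.Icc (0:ℝ) 1,
      dist (W x z l) (W y w l) ≤ (1 - l) * dist x y + l * dist z w)
    (C : Set X) (hC : ∀ x ∈ C, ∀ y ∈ C, ∀ l ∈ Set.Icc (0:ℝ) 1, W x y l ∈ C)
    (T : X → X) (hT : ∀ x ∈ C, T x ∈ C)
    (hTne : ∀ x ∈ C, ∀ y ∈ C, dist (T x) (T y) ≤ dist x y)
    (p : X) (hp : p ∈ C) (hfix : T p = p)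
    (u y0 : X) (hu : u ∈ C) (hy0 : y0 ∈ C)
    (lam : ℝ) (hlam : 0 < lam ∧ lam ≤ 1)
    (β : ℕ → ℝ) (hβ : ∀ n, β n ∈ Set.Icc (0:ℝ) 1)
    (hβ1 : β 1 = 0) (hβn : ∀ n, 2 ≤ n → β n = 1 - 2 / (n : ℝ))
    (y : ℕ → X) (hy0' : y 0 = y0)
    (hyrec : ∀ n, y (n + 1) = W u (W (y n) (T (y n)) lam) (β (n + 1)))
    (M : ℕ) (hM1 : 1 ≤ M) (hM : 4 * max (dist u p) (dist y0 p) ≤ (M : ℝ)) :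
    ∀ n : ℕ, dist (y (n + 1)) (y n) ≤ 2 * M / (n + 1) ∧
      dist (y n) (T (y n)) ≤ 4 * M / (lam * (n + 1)) := by
  obtain ⟨hlam0, hlam1⟩ := hlam
  have hl01 : lam ∈ Set.Icc (0:ℝ) 1 := ⟨hlam0.le, hlam1⟩
  have hM0 : (1:ℝ) ≤ M := by exact_mod_cast hM1
  -- W x y 0 = x and W x y 1 = y
  have hW0 : ∀ x z : X, W x z 0 = x := by
    intro x z
    have h := W1 x z x 0 ⟨le_refl 0, zero_le_one⟩
    simp at h
    exact h.symm
  have hWone : ∀ x z : X, W x z 1 = z := by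
    intro x z
    have h := W1 x z z 1 ⟨zero_le_one, le_refl 1⟩
    simp at h
    exact h.symm
  -- membership
  have hyC : ∀ n, y n ∈ C := by
    intro n
    induction n with
    | zero => rw [hy0']; exact hy0
    | succ n ih =>
      rw [hyrec]
      exact hC u hu _ (hC _ ih _ (hT _ ih) lam hl01) _ (hβ (n+1))
  -- nonexpansive: dist p (T (y n)) ≤ dist p (y n)
  have hTp : ∀ n, dist p (T (y n)) ≤ dist p (y n) := by
    intro n
    calc dist p (T (y n)) = dist (T p) (T (y n)) := by rw [hfix]
      _ ≤ dist p (y n) := hTne p hp _ (hyC n)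
  -- dist p z_n ≤ dist p y_n
  have hzp : ∀ n, dist p (W (y n) (T (y n)) lam) ≤ dist p (y n) := by
    intro n
    have h := W1 (y n) (T (y n)) p lam hl01
    nlinarith [hTp n, hl01.1, hl01.2, dist_nonneg (x := p) (y := y n)]
  -- boundedness : dist p (y n) ≤ M / 4
  have hup : dist p u ≤ (M:ℝ)/4 := by
    rw [dist_comm]
    have := le_max_left (dist u p) (dist y0 p)
    linarith
  have hyp : ∀ n, dist p (y n) ≤ (M:ℝ)/4 := by
    intro n
    induction n with
    | zero =>
      rw [hy0', dist_comm]
      have := le_max_right (dist u p) (dist y0 p)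
      linarith
    | succ n ih =>
      rw [hyrec]
      have h := W1 u (W (y n) (T (y n)) lam) p (β (n+1)) (hβ (n+1))
      have hb := hβ (n+1)
      have hz := le_trans (hzp n) ih
      nlinarith [hb.1, hb.2]
  -- dist u z_n ≤ M / 2
  have huz : ∀ n, dist u (W (y n) (T (y n)) lam) ≤ (M:ℝ)/2 := by
    intro n
    have h := dist_triangle u p (W (y n) (T (y n)) lam)
    have := le_trans (hzp n) (hyp n)
    rw [dist_comm u p] at h
    linarith
  -- z contraction
  have hzz : ∀ n, dist (W (y (n+1)) (T (y (n+1))) lam) (W (y n) (T (y n)) lam)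
      ≤ dist (y (n+1)) (y n) := by
    intro n
    have h := W4 (y (n+1)) (y n) (T (y (n+1))) (T (y n)) lam hl01
    have hne := hTne _ (hyC (n+1)) _ (hyC n)
    nlinarith [hl01.1, hl01.2]
  -- Claim 1
  have claim1 : ∀ n : ℕ, dist (y (n + 1)) (y n) ≤ 2 * M / ((n:ℝ) + 1) := by
    intro n
    induction n with
    | zero =>
      rw [hyrec 0, hβ1, hW0, hy0']
      have h := dist_triangle u p y0
      have h2 : dist p y0 ≤ (M:ℝ)/4 := by
        rw [dist_comm]
        have := le_max_right (dist u p) (dist y0 p); linarith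
      have h' : dist u p = dist p u := dist_comm u p
      norm_num
      linarith
    | succ n ih =>
      -- key inequality
      set z : ℕ → X := fun k => W (y k) (T (y k)) lam with hzdef
      have key : dist (y (n+2)) (y (n+1)) ≤
          |β (n+2) - β (n+1)| * dist u (z (n+1)) + β (n+1) * dist (z (n+1)) (z n) := by
        have e2 : y (n+2) = W u (z (n+1)) (β (n+2)) := by
          simp only [hzdef]; exact hyrec (n+1)
        have e1 : y (n+1) = W u (z n) (β (n+1)) := by
          simp only [hzdef]; exact hyrec n
        rw [e2, e1]
        have htri := dist_triangle (W u (z (n+1)) (β (n+2))) (W u (z (n+1)) (β (n+1)))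
          (W u (z n) (β (n+1)))
        have hA := W2 u (z (n+1)) (β (n+2)) (hβ _) (β (n+1)) (hβ _)
        have hB := W4 u u (z (n+1)) (z n) (β (n+1)) (hβ _)
        simp [dist_self] at hB
        calc dist (W u (z (n+1)) (β (n+2))) (W u (z n) (β (n+1)))
            ≤ dist (W u (z (n+1)) (β (n+2))) (W u (z (n+1)) (β (n+1)))
              + dist (W u (z (n+1)) (β (n+1))) (W u (z n) (β (n+1))) := htri
          _ ≤ |β (n+2) - β (n+1)| * dist u (z (n+1)) + β (n+1) * dist (z (n+1)) (z n) := by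
              rw [hA]; linarith
      match n with
      | 0 =>
        have hb2 : β 2 = 0 := by rw [hβn 2 (by norm_num)]; norm_num
        rw [hb2, hβ1] at key
        simp at key
        norm_num [key]
      | Nat.succ m =>
        have hNm : (1:ℝ) ≤ (m:ℝ) + 1 := by
          have := Nat.cast_nonneg (α := ℝ) m; linarith
        set N : ℝ := (m:ℝ) + 1 with hNdef
        have hN1 : (0:ℝ) < N + 1 := by positivity
        have hN2 : (0:ℝ) < N + 2 := by positivity
        have hb1 : β (m+2) = 1 - 2/(N+1) := by
          rw [hβn (m+2) (by omega)]; push_cast; ring_nf; rw [hNdef]; ring_nf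
        have hb2 : β (m+3) = 1 - 2/(N+2) := by
          rw [hβn (m+3) (by omega)]; push_cast; ring_nf; rw [hNdef]; ring_nf
        have habs : |β (m+3) - β (m+2)| = 2/(N+1) - 2/(N+2) := by
          rw [hb1, hb2]
          rw [abs_of_nonneg]
          · ring
          · have : 2/(N+2) ≤ 2/(N+1) := by
              apply div_le_div_of_nonneg_left (by norm_num) (by linarith) (by linarith)
            linarith
        have hkey2 : dist (y (m+3)) (y (m+2)) ≤
            (2/(N+1) - 2/(N+2)) * ((M:ℝ)/2) + (1 - 2/(N+1)) * (2*M/(N+1)) := by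
          have h1 := huz (m+2)
          have h2 := le_trans (hzz (m+1)) ih
          have hb1pos : 0 ≤ β (m+2) := (hβ _).1
          have heps : (0:ℝ) ≤ 2/(N+1) - 2/(N+2) := by
            have : 2/(N+2) ≤ 2/(N+1) := by
              apply div_le_div_of_nonneg_left (by norm_num) (by linarith) (by linarith)
            linarith
          have hb1' : (0:ℝ) ≤ 1 - 2/(N+1) := by rw [← hb1]; exact hb1pos
          have ih' : dist (y (m+2)) (y (m+1)) ≤ 2*M/(N+1) := by
            have h := ih
            rw [hNdef]
            push_cast at h ⊢
            linarith
          calc dist (y (m+3)) (y (m+2))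
              ≤ |β (m+3) - β (m+2)| * dist u (z (m+2)) + β (m+2) * dist (z (m+2)) (z (m+1)) := key
            _ ≤ (2/(N+1) - 2/(N+2)) * ((M:ℝ)/2) + (1 - 2/(N+1)) * (2*M/(N+1)) := by
                rw [habs, hb1]
                have hd := dist_nonneg (x := u) (y := z (m+2))
                have hd2 := le_trans (hzz (m+1)) ih'
                nlinarith [dist_nonneg (x := z (m+2)) (y := z (m+1))]
        have hne1 : (N+1) ≠ 0 := ne_of_gt hN1
        have hne2 : (N+2) ≠ 0 := ne_of_gt hN2
        have hfin : (2/(N+1) - 2/(N+2)) * ((M:ℝ)/2) + (1 - 2/(N+1)) * (2*M/(N+1))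
            ≤ 2*M/(N+2) := by
          rw [show (2/(N+1) - 2/(N+2)) * ((M:ℝ)/2) + (1 - 2/(N+1)) * (2*M/(N+1))
              = ((M:ℝ)*(N+1) + 2*M*(N-1)*(N+2)) / ((N+1)*((N+1)*(N+2))) from by
            field_simp; ring]
          rw [div_le_div_iff₀ (by positivity) hN2]
          have hd : 2*(M:ℝ)*((N+1)*((N+1)*(N+2))) - ((M:ℝ)*(N+1)+2*M*(N-1)*(N+2))*(N+2)
              = M*((N+2)*(N+5)) := by ring
          have hnn : (0:ℝ) ≤ (M:ℝ)*((N+2)*(N+5)) :=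
            mul_nonneg (by linarith) (by nlinarith)
          linarith
        have hcast : ((Nat.succ m + 1 : ℕ) : ℝ) + 1 = N + 2 := by
          rw [hNdef]; push_cast; ring
        rw [hcast]
        exact le_trans hkey2 hfin
  -- main
  intro n
  refine ⟨by exact_mod_cast claim1 n, ?_⟩
  rcases n with _ | m
  case zero =>
    rw [hy0']
    have h1 : dist y0 (T y0) ≤ (M:ℝ)/2 := by
      have h := dist_triangle y0 p (T y0)
      have h2 : dist p (T y0) ≤ dist p y0 := by
        calc dist p (T y0) = dist (T p) (T y0) := by rw [hfix]
          _ ≤ dist p y0 := hTne p hp _ hy0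
      have h3 : dist p y0 ≤ (M:ℝ)/4 := by rw [← hy0']; exact hyp 0
      rw [dist_comm y0 p] at h
      linarith
    norm_num
    rw [le_div_iff₀ hlam0]
    nlinarith [hM0, hlam0.le, hlam1, dist_nonneg (x := y0) (y := T y0)]
  case succ =>
    set N : ℝ := (m:ℝ) + 1 with hNdef
    have hN1 : (0:ℝ) < N + 1 := by positivity
    set s := dist (y (m+1)) (T (y (m+1))) with hsdef
    have h0 : dist (y (m+1)) (W (y (m+1)) (T (y (m+1))) lam) = lam * s := by
      have h := W2 (y (m+1)) (T (y (m+1))) 0 ⟨le_refl 0, zero_le_one⟩ lam hl01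
      rw [hW0] at h
      rw [h, abs_of_nonpos (by linarith), hsdef]
      ring
    have h1 : dist (y (m+2)) (W (y (m+1)) (T (y (m+1))) lam) = (2/(N+1)) * dist u (W (y (m+1)) (T (y (m+1))) lam) := by
      rw [hyrec (m+1)]
      have h := W2 u (W (y (m+1)) (T (y (m+1))) lam) (β (m+2)) (hβ _) 1 ⟨zero_le_one, le_refl 1⟩
      rw [hWone] at h
      rw [h, hβn (m+2) (by omega)]
      congr 1
      rw [abs_of_nonpos]
      · rw [hNdef]; push_cast; ring
      · have hpos : (0:ℝ) ≤ 2/((m:ℝ)+2) := by positivity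
        push_cast
        linarith
    have hls : lam * s ≤ 3 * M / (N+1) := by
      have htri := dist_triangle (y (m+1)) (y (m+2)) (W (y (m+1)) (T (y (m+1))) lam)
      rw [h1] at htri
      rw [← h0]
      have hc1 : dist (y (m+1)) (y (m+2)) ≤ 2*M/(N+1) := by
        rw [dist_comm, hNdef]
        have h := claim1 (m+1)
        push_cast at h ⊢
        linarith
      have hc2 := huz (m+1)
      have h2MN : (2/(N+1)) * dist u (W (y (m+1)) (T (y (m+1))) lam) ≤ M/(N+1) := by
        rw [div_mul_eq_mul_div, div_le_div_iff₀ hN1 hN1]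
        nlinarith [dist_nonneg (x := u) (y := W (y (m+1)) (T (y (m+1))) lam)]
      have : 2*M/(N+1) + M/(N+1) = 3*M/(N+1) := by ring
      linarith
    have hsnn : 0 ≤ s := dist_nonneg
    have hls' : lam * s * (N+1) ≤ 3 * M := (le_div_iff₀ hN1).mp hls
    have hgoal : s ≤ 4*M/(lam*(N+1)) := by
      rw [le_div_iff₀ (by positivity)]
      calc s * (lam*(N+1)) = lam * s * (N+1) := by ring
        _ ≤ 3*M := hls'
        _ ≤ 4*M := by linarith
    rw [hNdef] at hgoal
    push_cast at hgoal ⊢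
    linarith
end

section
/- Let X be a W-hyperbolic space, C ⊆ X convex, T : C → C nonexpansive with fixed point p, u, x₀ ∈ C, λ ∈ (0,1], β₁ = 0, βₙ = 1 − 2/n for n ≥ 2 (β₀ arbitrary in [0,1]). Define the Tikhonov-Mann iteration uₙ = (1−βₙ)u + βₙxₙ, x_{n+1} = (1−λ)uₙ + λT(uₙ). If K ∈ ℕ, K ≥ 1, K ≥ max{d(x₀,p), d(u,p)}, then for all n ≥ 1: d(x_{n+1}, xₙ) ≤ 4K/n and d(xₙ, T xₙ) ≤ 8K/(λn). -/
/-- Linear rates of asymptotic regularity for the Tikhonov-Mann iteration with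
λₙ = λ, β₁ = 0, βₙ = 1 − 2/n (n ≥ 2), in W-hyperbolic spaces. -/
theorem tikhonovMann_linear_rate {X : Type*} [MetricSpace X] (W : X → X → ℝ → X)
    (W1 : ∀ x y z : X, ∀ l ∈ Set.Icc (0:ℝ) 1,
      dist z (W x y l) ≤ (1 - l) * dist z x + l * dist z y)
    (W2 : ∀ x y : X, ∀ l ∈ Set.Icc (0:ℝ) 1, ∀ m ∈ Set.Icc (0:ℝ) 1,
      dist (W x y l) (W x y m) = |l - m| * dist x y)
    (W3 : ∀ x y : X, ∀ l ∈ Set.Icc (0:ℝ) 1, W x y l = W y x (1 - l))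
    (W4 : ∀ x y z w : X, ∀ l ∈ Set.Icc (0:ℝ) 1,
      dist (W x z l) (W y w l) ≤ (1 - l) * dist x y + l * dist z w)
    (C : Set X) (hC : ∀ x ∈ C, ∀ y ∈ C, ∀ l ∈ Set.Icc (0:ℝ) 1, W x y l ∈ C)
    (T : X → X) (hT : ∀ x ∈ C, T x ∈ C)
    (hTne : ∀ x ∈ C, ∀ y ∈ C, dist (T x) (T y) ≤ dist x y)
    (p : X) (hp : p ∈ C) (hfix : T p = p)
    (u x0 : X) (hu : u ∈ C) (hx0 : x0 ∈ C)
    (lam : ℝ) (hlam : 0 < lam ∧ lam ≤ 1)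
    (β : ℕ → ℝ) (hβ : ∀ n, β n ∈ Set.Icc (0:ℝ) 1)
    (hβ1 : β 1 = 0) (hβn : ∀ n, 2 ≤ n → β n = 1 - 2 / (n : ℝ))
    (x uu : ℕ → X) (hx0' : x 0 = x0)
    (huu : ∀ n, uu n = W u (x n) (β n))
    (hxrec : ∀ n, x (n + 1) = W (uu n) (T (uu n)) lam)
    (K : ℕ) (hK1 : 1 ≤ K) (hK : max (dist x0 p) (dist u p) ≤ (K : ℝ)) :
    ∀ n : ℕ, 1 ≤ n → dist (x (n + 1)) (x n) ≤ 4 * K / n ∧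
      dist (x n) (T (x n)) ≤ 8 * K / (lam * n) := by
  obtain ⟨hl0, hl1⟩ := hlam
  have hlamI : lam ∈ Set.Icc (0:ℝ) 1 := ⟨hl0.le, hl1⟩
  have hK0 : (0:ℝ) ≤ (K:ℝ) := Nat.cast_nonneg K
  have hKu : dist u p ≤ (K:ℝ) := le_trans (le_max_right _ _) hK
  -- memberships
  have hxC : ∀ n, x n ∈ C := by
    intro n
    induction n with
    | zero => rw [hx0']; exact hx0
    | succ n ih =>
      have h1 : uu n ∈ C := by rw [huu]; exact hC u hu (x n) ih (β n) (hβ n)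
      rw [hxrec]; exact hC _ h1 _ (hT _ h1) lam hlamI
  have huuC : ∀ n, uu n ∈ C := fun n => by
    rw [huu]; exact hC u hu (x n) (hxC n) (β n) (hβ n)
  -- uniform bound on d(x n, p)
  have hxb : ∀ n, dist (x n) p ≤ (K:ℝ) := by
    intro n
    induction n with
    | zero => rw [hx0']; exact le_trans (le_max_left _ _) hK
    | succ n ih =>
      have hub : dist (uu n) p ≤ (K:ℝ) := by
        rw [huu, dist_comm]
        calc dist p (W u (x n) (β n)) ≤ (1 - β n) * dist p u + β n * dist p (x n) :=
              W1 u (x n) p (β n) (hβ n)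
          _ ≤ (1 - β n) * K + β n * K := by
              rw [dist_comm p u, dist_comm p (x n)]
              have h1 := (hβ n).1; have h2 := (hβ n).2
              nlinarith [hKu, ih]
          _ = K := by ring
      rw [hxrec, dist_comm]
      calc dist p (W (uu n) (T (uu n)) lam)
          ≤ (1 - lam) * dist p (uu n) + lam * dist p (T (uu n)) := W1 _ _ p lam hlamI
        _ ≤ (1 - lam) * K + lam * K := by
            rw [dist_comm p (uu n), dist_comm p (T (uu n))]
            have hT1 : dist (T (uu n)) p ≤ dist (uu n) p := by
              calc dist (T (uu n)) p = dist (T (uu n)) (T p) := by rw [hfix]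
                _ ≤ dist (uu n) p := hTne _ (huuC n) _ hp
            nlinarith [hub, hT1]
        _ = K := by ring
  have hub : ∀ n, dist (uu n) p ≤ (K:ℝ) := by
    intro n
    rw [huu, dist_comm]
    calc dist p (W u (x n) (β n)) ≤ (1 - β n) * dist p u + β n * dist p (x n) :=
          W1 u (x n) p (β n) (hβ n)
      _ ≤ (1 - β n) * K + β n * K := by
          rw [dist_comm p u, dist_comm p (x n)]
          have h1 := (hβ n).1; have h2 := (hβ n).2
          nlinarith [hKu, hxb n]
      _ = K := by ring
  have hxu : ∀ n, dist (x n) u ≤ 2*K := by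
    intro n
    calc dist (x n) u ≤ dist (x n) p + dist p u := dist_triangle _ _ _
      _ ≤ K + K := add_le_add (hxb n) (by rw [dist_comm]; exact hKu)
      _ = 2*K := by ring
  -- d(x n, uu n)
  have hd : ∀ n, dist (x n) (uu n) ≤ (1 - β n) * (2*K) := by
    intro n
    rw [huu]
    calc dist (x n) (W u (x n) (β n))
        ≤ (1 - β n) * dist (x n) u + β n * dist (x n) (x n) := W1 u (x n) (x n) (β n) (hβ n)
      _ = (1 - β n) * dist (x n) u := by simp
      _ ≤ (1 - β n) * (2*K) :=
          mul_le_mul_of_nonneg_left (hxu n) (by linarith [(hβ n).2])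
  have hdn : ∀ n, 1 ≤ n → dist (x n) (uu n) ≤ 4*K/(n:ℝ) := by
    intro n hn
    rcases eq_or_lt_of_le hn with h1 | h2
    · subst h1
      have := hd 1
      rw [hβ1] at this
      norm_num at this ⊢
      linarith
    · have hn2 : 2 ≤ n := h2
      have hN : (2:ℝ) ≤ (n:ℝ) := by exact_mod_cast hn2
      have hN0 : (0:ℝ) < (n:ℝ) := by linarith
      have := hd n
      rw [hβn n hn2] at this
      have e : (1 - (1 - 2/(n:ℝ))) * (2*(K:ℝ)) = 4*K/(n:ℝ) := by
        field_simp; ring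
      linarith [e ▸ this]
  -- the recurrence bound on consecutive distances
  have ha : ∀ n, 1 ≤ n → dist (x (n+1)) (x n) ≤ 4*K/(n:ℝ) := by
    intro n hn
    induction n, hn using Nat.le_induction with
    | base =>
      calc dist (x 2) (x 1) ≤ dist (x 2) p + dist p (x 1) := dist_triangle _ _ _
        _ ≤ K + K := add_le_add (hxb 2) (by rw [dist_comm]; exact hxb 1)
        _ ≤ 4*K/(1:ℕ) := by norm_num; linarith
    | succ n hn ih =>
      have step : dist (x (n+2)) (x (n+1)) ≤
          |β (n+1) - β n| * (2*(K:ℝ)) + β n * dist (x (n+1)) (x n) := by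
        have h1 : dist (x (n+2)) (x (n+1)) ≤ dist (uu (n+1)) (uu n) := by
          rw [hxrec (n+1), hxrec n]
          calc dist (W (uu (n+1)) (T (uu (n+1))) lam) (W (uu n) (T (uu n)) lam)
              ≤ (1-lam) * dist (uu (n+1)) (uu n) + lam * dist (T (uu (n+1))) (T (uu n)) :=
                W4 _ _ _ _ lam hlamI
            _ ≤ (1-lam) * dist (uu (n+1)) (uu n) + lam * dist (uu (n+1)) (uu n) := by
                have := hTne _ (huuC (n+1)) _ (huuC n)
                nlinarith
            _ = dist (uu (n+1)) (uu n) := by ring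
        have h2 : dist (uu (n+1)) (uu n) ≤
            |β (n+1) - β n| * dist u (x (n+1)) + β n * dist (x (n+1)) (x n) := by
          rw [huu (n+1), huu n]
          calc dist (W u (x (n+1)) (β (n+1))) (W u (x n) (β n))
              ≤ dist (W u (x (n+1)) (β (n+1))) (W u (x (n+1)) (β n))
                + dist (W u (x (n+1)) (β n)) (W u (x n) (β n)) := dist_triangle _ _ _
            _ ≤ |β (n+1) - β n| * dist u (x (n+1)) + β n * dist (x (n+1)) (x n) := by
                have e1 := W2 u (x (n+1)) (β (n+1)) (hβ (n+1)) (β n) (hβ n)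
                have e2 := W4 u u (x (n+1)) (x n) (β n) (hβ n)
                simp only [dist_self, mul_zero, zero_add] at e2
                linarith
        have h3 : dist u (x (n+1)) ≤ 2*(K:ℝ) := by rw [dist_comm]; exact hxu (n+1)
        have := mul_le_mul_of_nonneg_left h3 (abs_nonneg (β (n+1) - β n))
        linarith
      rcases eq_or_lt_of_le hn with rfl | h2
      · -- n = 1 : β 1 = 0, β 2 = 0
        have hβ2 : β 2 = 0 := by rw [hβn 2 le_rfl]; norm_num
        rw [hβ1, hβ2] at step
        simp at step
        show dist (x 3) (x 2) ≤ 4*(K:ℝ)/((2:ℕ):ℝ)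
        rw [step, dist_self]
        positivity
      · have hn2 : 2 ≤ n := h2
        have hN : (2:ℝ) ≤ (n:ℝ) := by exact_mod_cast hn2
        have hN0 : (0:ℝ) < (n:ℝ) := by linarith
        have hN1 : (0:ℝ) < (n:ℝ)+1 := by linarith
        have habs : |β (n+1) - β n| = 2/(n:ℝ) - 2/((n:ℝ)+1) := by
          rw [hβn n hn2, hβn (n+1) (by omega)]
          push_cast
          rw [abs_of_nonneg]
          · ring
          · have : 2/((n:ℝ)+1) ≤ 2/(n:ℝ) := by gcongr; linarith
            linarith
        have key : (2/(n:ℝ) - 2/((n:ℝ)+1)) * (2*(K:ℝ)) + (1 - 2/(n:ℝ)) * (4*K/(n:ℝ))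
            ≤ 4*K/((n:ℝ)+1) := by
          rw [← sub_nonneg]
          have e : 4*(K:ℝ)/((n:ℝ)+1) - ((2/(n:ℝ) - 2/((n:ℝ)+1)) * (2*(K:ℝ))
              + (1 - 2/(n:ℝ)) * (4*K/(n:ℝ))) = 8*K/((n:ℝ)^2*((n:ℝ)+1)) := by
            field_simp
            ring
          rw [e]; positivity
        have hb : (0:ℝ) ≤ 1 - 2/(n:ℝ) := by
          have : 2/(n:ℝ) ≤ 2/2 := by gcongr
          norm_num at this; linarith
        have h4 : (1 - 2/(n:ℝ)) * dist (x (n+1)) (x n) ≤ (1 - 2/(n:ℝ)) * (4*K/(n:ℝ)) :=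
          mul_le_mul_of_nonneg_left ih hb
        rw [habs, hβn n hn2] at step
        push_cast
        linarith
  -- main statement
  intro n hn
  have hN0 : (0:ℝ) < (n:ℝ) := by exact_mod_cast Nat.pos_of_ne_zero (by omega)
  refine ⟨ha n hn, ?_⟩
  have h1 : dist (x n) (T (x n)) ≤ dist (x n) (x (n+1)) + dist (x (n+1)) (T (x n)) :=
    dist_triangle _ _ _
  have h2 : dist (x (n+1)) (T (x n)) ≤
      (1-lam) * dist (T (x n)) (uu n) + lam * dist (T (x n)) (T (uu n)) := by
    rw [hxrec n, dist_comm]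
    exact W1 _ _ _ lam hlamI
  have h3 : dist (T (x n)) (uu n) ≤ dist (x n) (uu n) + dist (x n) (T (x n)) := by
    calc dist (T (x n)) (uu n) ≤ dist (T (x n)) (x n) + dist (x n) (uu n) :=
          dist_triangle _ _ _
      _ = dist (x n) (uu n) + dist (x n) (T (x n)) := by
          rw [dist_comm (T (x n)) (x n)]; ring
  have h4 : dist (T (x n)) (T (uu n)) ≤ dist (x n) (uu n) := hTne _ (hxC n) _ (huuC n)
  have h3' := mul_le_mul_of_nonneg_left h3 (by linarith : (0:ℝ) ≤ 1 - lam)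
  have h4' := mul_le_mul_of_nonneg_left h4 hl0.le
  have hc : dist (x n) (x (n+1)) = dist (x (n+1)) (x n) := dist_comm _ _
  have h5 : lam * dist (x n) (T (x n)) ≤ dist (x (n+1)) (x n) + dist (x n) (uu n) := by
    nlinarith [h1, h2, h3', h4', hc]
  have h6 : dist (x (n+1)) (x n) + dist (x n) (uu n) ≤ 8*K/(n:ℝ) := by
    have e : 4*(K:ℝ)/(n:ℝ) + 4*K/(n:ℝ) = 8*K/(n:ℝ) := by ring
    linarith [ha n hn, hdn n hn]
  rw [le_div_iff₀ (by positivity : (0:ℝ) < lam * n)]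
  have h7 := mul_le_mul_of_nonneg_right (h5.trans h6) hN0.le
  have e2 : 8*(K:ℝ)/(n:ℝ) * (n:ℝ) = 8*K := by field_simp
  nlinarith [h7]
end

section
/- Let (X,d) be a metric space, (xₙ), (uₙ) sequences in X, and α : ℕ → ℕ a rate of convergence of d(xₙ,uₙ) to 0. If Ω : ℕ × ℕ^ℕ → ℕ is a rate of metastability of (uₙ), then Ω'(k,g) := Ω(3k+2, g_q) + q with q := α(3k+2) and g_q(n) := g(n+q)+q is a rate of metastability of (xₙ); i.e., for all k ∈ ℕ and g : ℕ → ℕ there exists N ≤ Ω'(k,g) with d(xᵢ, xⱼ) ≤ 1/(k+1) for all i, j ∈ [N, N+g(N)]. -/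
/-- Transfer of rates of metastability: if d(xₙ,uₙ) → 0 with rate α and Ω is a rate
of metastability of (uₙ), then Ω'(k,g) = Ω(3k+2, g_q) + q, q = α(3k+2),
g_q(n) = g(n+q)+q, is a rate of metastability of (xₙ). -/
theorem transfer_metastability {X : Type*} [MetricSpace X] (x u : ℕ → X)
    (α : ℕ → ℕ) (hα : ∀ k n, α k ≤ n → dist (x n) (u n) ≤ 1 / (k + 1))
    (Ω : ℕ → (ℕ → ℕ) → ℕ)
    (hΩ : ∀ (k : ℕ) (g : ℕ → ℕ), ∃ N ≤ Ω k g,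
      ∀ i j, N ≤ i → i ≤ N + g N → N ≤ j → j ≤ N + g N →
        dist (u i) (u j) ≤ 1 / (k + 1)) :
    ∀ (k : ℕ) (g : ℕ → ℕ),
      ∃ N ≤ Ω (3 * k + 2) (fun n => g (n + α (3 * k + 2)) + α (3 * k + 2))
            + α (3 * k + 2),
        ∀ i j, N ≤ i → i ≤ N + g N → N ≤ j → j ≤ N + g N →
          dist (x i) (x j) ≤ 1 / (k + 1) := by
  intro k g
  set q := α (3 * k + 2) with hq
  obtain ⟨N', hN'le, hN'⟩ := hΩ (3 * k + 2) (fun n => g (n + q) + q)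
  refine ⟨N' + q, by omega, ?_⟩
  intro i j hi hij hj hjj
  have hxi := hα (3 * k + 2) i (by omega)
  have hxj := hα (3 * k + 2) j (by omega)
  have huij := hN' i j (by omega) (by omega) (by omega) (by omega)
  have htri := dist_triangle4 (x i) (u i) (u j) (x j)
  rw [dist_comm (u j) (x j)] at htri
  have h3k : (1:ℝ) / ((3 * k + 2 : ℕ) + 1) = 1 / (3 * (k : ℝ) + 3) := by push_cast; ring_nf
  rw [h3k] at hxi hxj huij
  have hfin : (1:ℝ) / (3 * (k:ℝ) + 3) + 1 / (3 * (k:ℝ) + 3) + 1 / (3 * (k:ℝ) + 3)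
      = 1 / ((k:ℝ) + 1) := by
    rw [div_add_div _ _ (by positivity) (by positivity),
      div_add_div _ _ (by positivity) (by positivity),
      div_eq_div_iff (by positivity) (by positivity)]
    ring
  linarith
end

section
/- Let X be a W-hyperbolic space, C ⊆ X convex, T : C → C nonexpansive with fixed point p, u, y₀ ∈ C, and (βₙ), (λₙ) sequences in [0,1]. Let (yₙ) be the modified Halpern iteration y_{n+1} = (1−β_{n+1})u + β_{n+1}((1−λₙ)yₙ + λₙT(yₙ)), and M ≥ 4·max{d(u,p), d(y₀,p)} with M ∈ ℕ*. Suppose Σ : ℕ → ℕ is a rate of asymptotic regularity of (yₙ), σ₄ is a rate of convergence of (βₙ) to 1, and Λ ∈ ℕ*, N_Λ ∈ ℕ are such that λₙ ≥ 1/Λ for all n ≥ N_Λ. Then Σ̂(k) := max{N_Λ, Σ(2Λ(k+1)−1), σ₄(2MΛ(k+1)−1)} is a rate of T-asymptotic regularity of (yₙ): for all k and all n ≥ Σ̂(k), d(yₙ, Tyₙ) ≤ 1/(k+1). -/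
/-- From a rate of asymptotic regularity Σ of the modified Halpern iteration (yₙ),
a rate of convergence σ₄ of (βₙ) to 1, and λₙ ≥ 1/Λ for n ≥ N_Λ, one gets the rate
Σ̂(k) = max{N_Λ, Σ(2Λ(k+1)−1), σ₄(2MΛ(k+1)−1)} of T-asymptotic regularity of (yₙ). -/
theorem modifiedHalpern_T_asymptotic_regularity {X : Type*} [MetricSpace X]
    (W : X → X → ℝ → X)
    (W1 : ∀ x y z : X, ∀ l ∈ Set.Icc (0:ℝ) 1,
      dist z (W x y l) ≤ (1 - l) * dist z x + l * dist z y)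
    (W2 : ∀ x y : X, ∀ l ∈ Set.Icc (0:ℝ) 1, ∀ m ∈ Set.Icc (0:ℝ) 1,
      dist (W x y l) (W x y m) = |l - m| * dist x y)
    (W3 : ∀ x y : X, ∀ l ∈ Set.Icc (0:ℝ) 1, W x y l = W y x (1 - l))
    (W4 : ∀ x y z w : X, ∀ l ∈ Set.Icc (0:ℝ) 1,
      dist (W x z l) (W y w l) ≤ (1 - l) * dist x y + l * dist z w)
    (C : Set X) (hC : ∀ x ∈ C, ∀ y ∈ C, ∀ l ∈ Set.Icc (0:ℝ) 1, W x y l ∈ C)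
    (T : X → X) (hT : ∀ x ∈ C, T x ∈ C)
    (hTne : ∀ x ∈ C, ∀ y ∈ C, dist (T x) (T y) ≤ dist x y)
    (p : X) (hp : p ∈ C) (hfix : T p = p)
    (u y0 : X) (hu : u ∈ C) (hy0 : y0 ∈ C)
    (β lam : ℕ → ℝ) (hβ : ∀ n, β n ∈ Set.Icc (0:ℝ) 1)
    (hlam : ∀ n, lam n ∈ Set.Icc (0:ℝ) 1)
    (y : ℕ → X) (hy0' : y 0 = y0)
    (hyrec : ∀ n, y (n + 1) = W u (W (y n) (T (y n)) (lam n)) (β (n + 1)))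
    (M : ℕ) (hM1 : 1 ≤ M) (hM : 4 * max (dist u p) (dist y0 p) ≤ (M : ℝ))
    (Sig : ℕ → ℕ) (hSig : ∀ k n, Sig k ≤ n → dist (y n) (y (n + 1)) ≤ 1 / (k + 1))
    (σ₄ : ℕ → ℕ) (hσ₄ : ∀ k n, σ₄ k ≤ n → 1 - β n ≤ 1 / (k + 1))
    (Λ NΛ : ℕ) (hΛ1 : 1 ≤ Λ) (hΛ : ∀ n, NΛ ≤ n → 1 / (Λ : ℝ) ≤ lam n) :
    ∀ k n, max (max NΛ (Sig (2 * Λ * (k + 1) - 1))) (σ₄ (2 * M * Λ * (k + 1) - 1)) ≤ n →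
      dist (y n) (T (y n)) ≤ 1 / (k + 1) := by
  -- membership
  have yC : ∀ n, y n ∈ C := by
    intro n
    induction n with
    | zero => rw [hy0']; exact hy0
    | succ n ih =>
      rw [hyrec n]
      exact hC u hu _ (hC _ ih _ (hT _ ih) _ (hlam n)) _ (hβ (n+1))
  set K : ℝ := max (dist u p) (dist y0 p) with hK
  have hK0 : 0 ≤ K := le_trans dist_nonneg (le_max_left _ _)
  -- boundedness: dist (y n) p ≤ K
  have hb : ∀ n, dist (y n) p ≤ K := by
    intro n
    induction n with
    | zero => rw [hy0']; exact le_max_right _ _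
    | succ n ih =>
      have hTp : dist p (T (y n)) ≤ K := by
        calc dist p (T (y n)) = dist (T p) (T (y n)) := by rw [hfix]
          _ ≤ dist p (y n) := hTne p hp _ (yC n)
          _ ≤ K := by rw [dist_comm]; exact ih
      have hz : dist p (W (y n) (T (y n)) (lam n)) ≤ K := by
        have := W1 (y n) (T (y n)) p (lam n) (hlam n)
        have hl := hlam n
        rcases hl with ⟨hl0, hl1⟩
        nlinarith [dist_comm (y n) p ▸ ih]
      have := W1 u (W (y n) (T (y n)) (lam n)) p (β (n+1)) (hβ (n+1))
      rcases hβ (n+1) with ⟨hb0, hb1⟩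
      rw [hyrec n, dist_comm]
      have hup : dist p u ≤ K := by rw [dist_comm]; exact le_max_left _ _
      nlinarith
  -- dist u (T (y n)) ≤ M
  have hD : ∀ n, dist (T (y n)) u ≤ (M : ℝ) := by
    intro n
    have hTp : dist (T (y n)) p ≤ K := by
      calc dist (T (y n)) p = dist (T (y n)) (T p) := by rw [hfix]
        _ ≤ dist (y n) p := hTne _ (yC n) p hp
        _ ≤ K := hb n
    calc dist (T (y n)) u ≤ dist (T (y n)) p + dist p u := dist_triangle _ _ _
      _ ≤ K + K := by rw [dist_comm p u]; exact add_le_add hTp (le_max_left _ _)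
      _ ≤ (M : ℝ) := by nlinarith
  intro k n hn
  have hn1 : NΛ ≤ n := le_trans (le_trans (le_max_left _ _) (le_max_left _ _)) hn
  have hn2 : Sig (2 * Λ * (k + 1) - 1) ≤ n :=
    le_trans (le_trans (le_max_right _ _) (le_max_left _ _)) hn
  have hn3 : σ₄ (2 * M * Λ * (k + 1) - 1) ≤ n + 1 :=
    le_trans (le_trans (le_max_right _ _) hn) (Nat.le_succ n)
  set d : ℝ := dist (y n) (T (y n)) with hd
  have hd0 : 0 ≤ d := dist_nonneg
  set a : ℝ := dist (y n) (y (n+1)) with ha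
  rcases hβ (n+1) with ⟨hb0, hb1⟩
  rcases hlam n with ⟨hl0, hl1⟩
  -- key inequality
  have key : d ≤ a + (1 - β (n+1)) * dist (T (y n)) u + β (n+1) * (1 - lam n) * d := by
    have h1 : d ≤ a + dist (y (n+1)) (T (y n)) := by
      rw [hd, ha]
      calc dist (y n) (T (y n)) ≤ dist (y n) (y (n+1)) + dist (y (n+1)) (T (y n)) :=
        dist_triangle _ _ _
        _ = _ := rfl
    have h2 : dist (y (n+1)) (T (y n)) ≤ (1 - β (n+1)) * dist (T (y n)) u
        + β (n+1) * dist (T (y n)) (W (y n) (T (y n)) (lam n)) := by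
      rw [hyrec n, dist_comm]
      exact W1 u _ (T (y n)) (β (n+1)) ⟨hb0, hb1⟩
    have h3 : dist (T (y n)) (W (y n) (T (y n)) (lam n)) ≤ (1 - lam n) * d := by
      have := W1 (y n) (T (y n)) (T (y n)) (lam n) ⟨hl0, hl1⟩
      simp at this
      calc dist (T (y n)) (W (y n) (T (y n)) (lam n)) ≤ (1 - lam n) * dist (T (y n)) (y n) :=
        this
        _ = (1 - lam n) * d := by rw [hd, dist_comm]
    nlinarith
  -- numeric estimates
  have hΛR : (1:ℝ) ≤ (Λ : ℝ) := by exact_mod_cast hΛ1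
  have hMR : (1:ℝ) ≤ (M : ℝ) := by exact_mod_cast hM1
  have hkR : (0:ℝ) < (k : ℝ) + 1 := by positivity
  have hlamn : 1 / (Λ : ℝ) ≤ lam n := hΛ n hn1
  -- from key : lam n * d ≤ a + (1-β(n+1)) * M
  have hstep : lam n * d ≤ a + (1 - β (n+1)) * (M : ℝ) := by
    have hDM := hD n
    have hdtu : (0:ℝ) ≤ dist (T (y n)) u := dist_nonneg
    nlinarith [key, mul_nonneg (mul_nonneg (sub_nonneg.2 hl1) (sub_nonneg.2 hb1)) hd0,
      mul_nonneg (sub_nonneg.2 hb1) (sub_nonneg.2 hDM)]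
  have h1Λ : 1 ≤ 2 * Λ * (k + 1) :=
    calc 1 = 1 * 1 * 1 := rfl
      _ ≤ 2 * Λ * (k + 1) :=
        Nat.mul_le_mul (Nat.mul_le_mul (by norm_num) hΛ1) (Nat.succ_le_succ (Nat.zero_le k))
  have hsub1 : ((2 * Λ * (k + 1) - 1 : ℕ) : ℝ) + 1 = 2 * (Λ:ℝ) * ((k:ℝ) + 1) := by
    rw [Nat.cast_sub h1Λ]; push_cast; ring
  have h1M : 1 ≤ 2 * M * Λ * (k + 1) :=
    calc 1 = 1 * 1 * 1 * 1 := rfl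
      _ ≤ 2 * M * Λ * (k + 1) :=
        Nat.mul_le_mul (Nat.mul_le_mul (Nat.mul_le_mul (by norm_num) hM1) hΛ1)
          (Nat.succ_le_succ (Nat.zero_le k))
  have hsub2 : ((2 * M * Λ * (k + 1) - 1 : ℕ) : ℝ) + 1 = 2 * (M:ℝ) * (Λ:ℝ) * ((k:ℝ) + 1) := by
    rw [Nat.cast_sub h1M]; push_cast; ring
  have haB : a ≤ 1 / (2 * (Λ:ℝ) * ((k:ℝ) + 1)) := by
    have := hSig _ n hn2
    rwa [hsub1] at this
  have hbB : 1 - β (n+1) ≤ 1 / (2 * (M:ℝ) * (Λ:ℝ) * ((k:ℝ) + 1)) := by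
    have := hσ₄ _ (n+1) hn3
    rwa [hsub2] at this
  -- combine: (1/Λ) * d ≤ lam n * d ≤ a + (1-β)*M ≤ 1/(2Λ(k+1)) + 1/(2Λ(k+1)) = 1/(Λ(k+1))
  have hΛ0 : (0:ℝ) < (Λ:ℝ) := by linarith
  have hM0 : (0:ℝ) < (M:ℝ) := by linarith
  have h4 : (1 / (Λ:ℝ)) * d ≤ 1 / ((Λ:ℝ) * ((k:ℝ)+1)) := by
    have h5 : (1 / (Λ:ℝ)) * d ≤ lam n * d := mul_le_mul_of_nonneg_right hlamn hd0
    have h6 : (1 - β (n+1)) * (M:ℝ) ≤ 1 / (2 * (Λ:ℝ) * ((k:ℝ)+1)) := by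
      have := mul_le_mul_of_nonneg_right hbB (le_of_lt hM0)
      calc (1 - β (n+1)) * (M:ℝ) ≤ (1 / (2 * (M:ℝ) * (Λ:ℝ) * ((k:ℝ) + 1))) * (M:ℝ) := this
        _ = 1 / (2 * (Λ:ℝ) * ((k:ℝ)+1)) := by field_simp
    have : (1 / (Λ:ℝ)) * d ≤ 1 / (2 * (Λ:ℝ) * ((k:ℝ)+1)) + 1 / (2 * (Λ:ℝ) * ((k:ℝ)+1)) := by
      linarith [hstep, haB]
    calc (1 / (Λ:ℝ)) * d ≤ 1 / (2 * (Λ:ℝ) * ((k:ℝ)+1)) + 1 / (2 * (Λ:ℝ) * ((k:ℝ)+1)) := this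
      _ = 1 / ((Λ:ℝ) * ((k:ℝ)+1)) := by field_simp; ring
  calc d = (Λ:ℝ) * ((1 / (Λ:ℝ)) * d) := by field_simp
    _ ≤ (Λ:ℝ) * (1 / ((Λ:ℝ) * ((k:ℝ)+1))) := mul_le_mul_of_nonneg_left h4 (le_of_lt hΛ0)
    _ = 1 / ((k:ℝ)+1) := by field_simp
end

section
/- Let X be a W-hyperbolic space, C ⊆ X convex, T : C → C nonexpansive, u ∈ C, (βₙ), (λₙ) sequences in [0,1], and (yₙ) the modified Halpern iteration y_{n+1} = (1−β_{n+1})u + β_{n+1}((1−λₙ)yₙ + λₙT(yₙ)). Then for all n ≥ 1: d(y_{n+1}, yₙ) ≤ β_{n+1}(d(yₙ, y_{n−1}) + |λₙ − λ_{n−1}|·d(y_{n−1}, T y_{n−1})) + |β_{n+1} − βₙ|·cₙ, where cₙ = (1−λ_{n−1})d(u, y_{n−1}) + λ_{n−1}d(u, T y_{n−1}). -/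
/-- Recursive estimate for consecutive terms of the modified Halpern iteration. -/
theorem modifiedHalpern_consecutive_estimate {X : Type*} [MetricSpace X]
    (W : X → X → ℝ → X)
    (W1 : ∀ x y z : X, ∀ l ∈ Set.Icc (0:ℝ) 1,
      dist z (W x y l) ≤ (1 - l) * dist z x + l * dist z y)
    (W2 : ∀ x y : X, ∀ l ∈ Set.Icc (0:ℝ) 1, ∀ m ∈ Set.Icc (0:ℝ) 1,
      dist (W x y l) (W x y m) = |l - m| * dist x y)
    (W3 : ∀ x y : X, ∀ l ∈ Set.Icc (0:ℝ) 1, W x y l = W y x (1 - l))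
    (W4 : ∀ x y z w : X, ∀ l ∈ Set.Icc (0:ℝ) 1,
      dist (W x z l) (W y w l) ≤ (1 - l) * dist x y + l * dist z w)
    (C : Set X) (hC : ∀ x ∈ C, ∀ y ∈ C, ∀ l ∈ Set.Icc (0:ℝ) 1, W x y l ∈ C)
    (T : X → X) (hT : ∀ x ∈ C, T x ∈ C)
    (hTne : ∀ x ∈ C, ∀ y ∈ C, dist (T x) (T y) ≤ dist x y)
    (u : X) (hu : u ∈ C)
    (β lam : ℕ → ℝ) (hβ : ∀ n, β n ∈ Set.Icc (0:ℝ) 1)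
    (hlam : ∀ n, lam n ∈ Set.Icc (0:ℝ) 1)
    (y : ℕ → X) (hy0 : y 0 ∈ C)
    (hyrec : ∀ n, y (n + 1) = W u (W (y n) (T (y n)) (lam n)) (β (n + 1))) :
    ∀ n : ℕ, 1 ≤ n →
      dist (y (n + 1)) (y n) ≤
        β (n + 1) * (dist (y n) (y (n - 1)) +
          |lam n - lam (n - 1)| * dist (y (n - 1)) (T (y (n - 1)))) +
        |β (n + 1) - β n| *
          ((1 - lam (n - 1)) * dist u (y (n - 1)) +
            lam (n - 1) * dist u (T (y (n - 1)))) := by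

  -- membership lemma
  have hyC : ∀ n, y n ∈ C := by
    intro n
    induction n with
    | zero => exact hy0
    | succ k ih =>
      rw [hyrec k]
      exact hC u hu _ (hC (y k) ih (T (y k)) (hT _ ih) (lam k) (hlam k)) _ (hβ (k+1))
  intro n hn
  obtain ⟨m, rfl⟩ : ∃ m, n = m + 1 := ⟨n - 1, (Nat.succ_pred_eq_of_pos hn).symm⟩
  simp only [Nat.add_sub_cancel]
  set z₁ := W (y (m+1)) (T (y (m+1))) (lam (m+1)) with hz₁
  set z₀ := W (y m) (T (y m)) (lam m) with hz₀
  set z₀' := W (y m) (T (y m)) (lam (m+1)) with hz₀'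
  have e1 : y (m+1+1) = W u z₁ (β (m+2)) := hyrec (m+1)
  have e0 : y (m+1) = W u z₀ (β (m+1)) := hyrec m
  have htri : dist (y (m+1+1)) (y (m+1)) ≤
      dist (W u z₁ (β (m+2))) (W u z₀ (β (m+2))) +
      dist (W u z₀ (β (m+2))) (W u z₀ (β (m+1))) := by
    rw [e1, e0]; exact dist_triangle _ _ _
  have h1 : dist (W u z₁ (β (m+2))) (W u z₀ (β (m+2))) ≤
      (1 - β (m+2)) * dist u u + β (m+2) * dist z₁ z₀ := W4 u u z₁ z₀ _ (hβ (m+2))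
  rw [dist_self, mul_zero, zero_add] at h1
  have h2 : dist z₁ z₀ ≤ dist z₁ z₀' + dist z₀' z₀ := dist_triangle _ _ _
  have h3 : dist z₁ z₀' ≤ (1 - lam (m+1)) * dist (y (m+1)) (y m) +
      lam (m+1) * dist (T (y (m+1))) (T (y m)) :=
    W4 _ _ _ _ _ (hlam (m+1))
  have h4 : dist (T (y (m+1))) (T (y m)) ≤ dist (y (m+1)) (y m) :=
    hTne _ (hyC (m+1)) _ (hyC m)
  have hl := hlam (m+1)
  have h3' : dist z₁ z₀' ≤ dist (y (m+1)) (y m) := by nlinarith [hl.1, hl.2]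
  have h5 : dist z₀' z₀ = |lam (m+1) - lam m| * dist (y m) (T (y m)) :=
    W2 _ _ _ (hlam (m+1)) _ (hlam m)
  have h6 : dist (W u z₀ (β (m+2))) (W u z₀ (β (m+1))) =
      |β (m+2) - β (m+1)| * dist u z₀ := W2 _ _ _ (hβ (m+2)) _ (hβ (m+1))
  have h7 : dist u z₀ ≤ (1 - lam m) * dist u (y m) + lam m * dist u (T (y m)) :=
    W1 _ _ _ _ (hlam m)
  have hb2 : 0 ≤ β (m+2) := (hβ (m+2)).1
  have habs : (0:ℝ) ≤ |β (m+2) - β (m+1)| := abs_nonneg _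
  calc dist (y (m+1+1)) (y (m+1)) ≤
      β (m+2) * dist z₁ z₀ + |β (m+2) - β (m+1)| * dist u z₀ := by
        rw [h6] at htri; linarith
    _ ≤ β (m+2) * (dist (y (m+1)) (y m) + |lam (m+1) - lam m| * dist (y m) (T (y m))) +
        |β (m+2) - β (m+1)| * ((1 - lam m) * dist u (y m) + lam m * dist u (T (y m))) := by
        have hA : dist z₁ z₀ ≤ dist (y (m+1)) (y m) +
            |lam (m+1) - lam m| * dist (y m) (T (y m)) := by
          rw [h5] at h2; linarith
        exact add_le_add (mul_le_mul_of_nonneg_left hA hb2)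
          (mul_le_mul_of_nonneg_left h7 habs)
end

section
/- Let X be a W-hyperbolic space, C ⊆ X convex, T : C → C nonexpansive with fixed point p, u, x₀ ∈ C, λ ∈ (0,1], β₁ = 0 and βₙ = 1 − 2/n for n ≥ 2. Let (xₙ) be the Tikhonov-Mann iteration with these scalars and y₀ := (1−β₀)u + β₀x₀, (yₙ) the corresponding modified Halpern iteration. If K ∈ ℕ*, K ≥ max{d(x₀,p), d(u,p)}, then for all n ≥ 1: d(xₙ, yₙ) ≤ 4K/n. -/
/-- With λₙ = λ, β₁ = 0, βₙ = 1 − 2/n (n ≥ 2), and y₀ = (1−β₀)u + β₀x₀, the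
Tikhonov-Mann iteration (xₙ) and the corresponding modified Halpern iteration (yₙ)
satisfy d(xₙ, yₙ) ≤ 4K/n for n ≥ 1. -/
theorem tikhonovMann_modifiedHalpern_distance {X : Type*} [MetricSpace X]
    (W : X → X → ℝ → X)
    (W1 : ∀ x y z : X, ∀ l ∈ Set.Icc (0:ℝ) 1,
      dist z (W x y l) ≤ (1 - l) * dist z x + l * dist z y)
    (W2 : ∀ x y : X, ∀ l ∈ Set.Icc (0:ℝ) 1, ∀ m ∈ Set.Icc (0:ℝ) 1,
      dist (W x y l) (W x y m) = |l - m| * dist x y)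
    (W3 : ∀ x y : X, ∀ l ∈ Set.Icc (0:ℝ) 1, W x y l = W y x (1 - l))
    (W4 : ∀ x y z w : X, ∀ l ∈ Set.Icc (0:ℝ) 1,
      dist (W x z l) (W y w l) ≤ (1 - l) * dist x y + l * dist z w)
    (C : Set X) (hC : ∀ x ∈ C, ∀ y ∈ C, ∀ l ∈ Set.Icc (0:ℝ) 1, W x y l ∈ C)
    (T : X → X) (hT : ∀ x ∈ C, T x ∈ C)
    (hTne : ∀ x ∈ C, ∀ y ∈ C, dist (T x) (T y) ≤ dist x y)
    (p : X) (hp : p ∈ C) (hfix : T p = p)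
    (u x0 : X) (hu : u ∈ C) (hx0 : x0 ∈ C)
    (lam : ℝ) (hlam : 0 < lam ∧ lam ≤ 1)
    (β : ℕ → ℝ) (hβ : ∀ n, β n ∈ Set.Icc (0:ℝ) 1)
    (hβ1 : β 1 = 0) (hβn : ∀ n, 2 ≤ n → β n = 1 - 2 / (n : ℝ))
    (x uu y : ℕ → X) (hx0' : x 0 = x0)
    (huu : ∀ n, uu n = W u (x n) (β n))
    (hxrec : ∀ n, x (n + 1) = W (uu n) (T (uu n)) lam)
    (hy0 : y 0 = W u (x 0) (β 0))
    (hyrec : ∀ n, y (n + 1) = W u (W (y n) (T (y n)) lam) (β (n + 1)))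
    (K : ℕ) (hK1 : 1 ≤ K) (hK : max (dist x0 p) (dist u p) ≤ (K : ℝ)) :
    ∀ n : ℕ, 1 ≤ n → dist (x n) (y n) ≤ 4 * K / n := by
  have hlamI : lam ∈ Set.Icc (0:ℝ) 1 := ⟨hlam.1.le, hlam.2⟩
  have hWpp : ∀ l ∈ Set.Icc (0:ℝ) 1, W p p l = p := by
    intro l hl
    have h := W1 p p p l hl
    simp at h
    exact h.symm
  have hmem : ∀ n, x n ∈ C ∧ uu n ∈ C := by
    intro n
    induction n with
    | zero =>
      have hx : x 0 ∈ C := hx0' ▸ hx0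
      exact ⟨hx, (huu 0) ▸ hC u hu _ hx _ (hβ 0)⟩
    | succ n ih =>
      have hx : x (n+1) ∈ C := (hxrec n) ▸ hC _ ih.2 _ (hT _ ih.2) _ hlamI
      exact ⟨hx, (huu (n+1)) ▸ hC u hu _ hx _ (hβ (n+1))⟩
  have hxp : ∀ n, dist (x n) p ≤ K := by
    intro n
    induction n with
    | zero => rw [hx0']; exact le_trans (le_max_left _ _) hK
    | succ n ih =>
      have hup : dist (uu n) p ≤ K := by
        rw [huu n]
        calc dist (W u (x n) (β n)) p
            = dist (W u (x n) (β n)) (W p p (β n)) := by rw [hWpp _ (hβ n)]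
          _ ≤ (1 - β n) * dist u p + β n * dist (x n) p := W4 _ _ _ _ _ (hβ n)
          _ ≤ (1 - β n) * K + β n * K := by
              have h1 := (hβ n).1
              have h2 := (hβ n).2
              gcongr
              · exact le_trans (le_max_right _ _) hK
          _ = K := by ring
      rw [hxrec n]
      calc dist (W (uu n) (T (uu n)) lam) p
          = dist (W (uu n) (T (uu n)) lam) (W p p lam) := by rw [hWpp _ hlamI]
        _ ≤ (1 - lam) * dist (uu n) p + lam * dist (T (uu n)) p := W4 _ _ _ _ _ hlamI
        _ ≤ (1 - lam) * dist (uu n) p + lam * dist (uu n) p := by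
            have : dist (T (uu n)) p ≤ dist (uu n) p := by
              have h := hTne _ (hmem n).2 p hp
              rwa [hfix] at h
            have := hlam.1
            gcongr
        _ = dist (uu n) p := by ring
        _ ≤ K := hup
  have hlink : ∀ n, y n = uu n := by
    intro n
    induction n with
    | zero => rw [hy0, huu 0]
    | succ n ih => rw [hyrec n, huu (n+1), hxrec n, ih]
  intro n hn
  rw [hlink n, huu n]
  have hxu : dist (x n) u ≤ 2 * K := by
    calc dist (x n) u ≤ dist (x n) p + dist p u := dist_triangle _ _ _
      _ ≤ K + K := by
          have h1 := hxp n
          have h2 : dist p u ≤ K := dist_comm p u ▸ le_trans (le_max_right _ _) hK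
          gcongr
      _ = 2 * K := by ring
  have key : dist (x n) (W u (x n) (β n)) ≤ (1 - β n) * (2 * K) := by
    calc dist (x n) (W u (x n) (β n))
        ≤ (1 - β n) * dist (x n) u + β n * dist (x n) (x n) := W1 _ _ _ _ (hβ n)
      _ = (1 - β n) * dist (x n) u := by simp
      _ ≤ (1 - β n) * (2 * K) := by
          have := (hβ n).2
          gcongr
  rcases eq_or_lt_of_le hn with h1 | h2
  · rw [← h1] at key ⊢
    rw [hβ1] at key ⊢
    have hK' : (0:ℝ) ≤ K := by positivity
    simp at key ⊢
    linarith
  · have h2' : 2 ≤ n := h2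
    rw [hβn n h2'] at key ⊢
    have hn0 : (0:ℝ) < n := by positivity
    calc dist (x n) (W u (x n) (1 - 2 / (n:ℝ))) ≤ (1 - (1 - 2 / n)) * (2 * K) := key
      _ = 4 * K / n := by field_simp; ring
end
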